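/- Let h = (1,...,1,2^0,...,2^d) ∈ R^(2d+1) (d ones then powers of 2) and M as above. Then for every n ∈ ℕ, h·M^n·e_{2d} = ∑_{λ ∈ S_Λ} c_λ·λ^n, where S_Λ is the set of (complex) roots of t^(d+1) - 2t^d - 1 and c_λ = λ^(d+1)/((d+1)λ - 2d). -/

import Mathlib

open Matrix

/-- The incidence matrix of the morphism φ. -/
def Mmat (d : ℕ) : Matrix (Fin (2 * d + 1)) (Fin (2 * d + 1)) ℂ :=
  Matrix.of fun i j =>
    if (i : ℕ) = 0 then 1
    else if (i : ℕ) = (j : ℕ) + 1 then 1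
    else if (i : ℕ) = 2 * d ∧ (j : ℕ) = 2 * d then 2
    else 0

/-- The last standard basis vector `e_{2d}`. -/
def eLast (d : ℕ) : Fin (2 * d + 1) → ℂ := Pi.single (Fin.last (2 * d)) 1

/-! ### Auxiliary material -/

open Polynomial Finset

/-! #### The scalar closed form of the row vectors `h · M^k` -/

noncomputable def corr (m : ℕ) : ℂ := if m = 0 then 0 else ((m:ℂ) - 1) * 2^m + 1

lemma corr_rel (m : ℕ) : corr m + 1 = 2 * corr (m - 1) + 2 ^ m := by
  match m with
  | 0 => simp [corr]
  | 1 => norm_num [corr]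
  | (n+2) =>
    have h1 : ¬ (n + 2 = 0) := by omega
    have h2 : n + 2 - 1 = n + 1 := by omega
    have h3 : ¬ (n + 1 = 0) := by omega
    rw [corr, if_neg h1, h2, corr, if_neg h3]
    push_cast
    ring

noncomputable def Vf (d t k : ℕ) : ℂ :=
  if t < d then 2^k else 2^(t-d) + 2^k - 1 + corr (t-(2*d+1))

noncomputable def Wf (d k j : ℕ) : ℂ := Vf d (j + k) k

lemma VA (d t k : ℕ) : Vf d t (k+1) = 2^k + Vf d t k := by
  unfold Vf; split_ifs <;> rw [pow_succ] <;> ring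

lemma VB (d k : ℕ) (hd : 1 ≤ d) : Vf d (2*d+k+1) k = 2 * Vf d (2*d+k) k := by
  unfold Vf
  rw [if_neg (by omega), if_neg (by omega),
    show 2*d+k+1-d = (d+k)+1 by omega, show 2*d+k+1-(2*d+1) = k by omega,
    show 2*d+k-d = d+k by omega, show 2*d+k-(2*d+1) = k-1 by omega]
  have := corr_rel k
  rw [pow_succ]
  linear_combination this

lemma Vrow (d j : ℕ) (hd : 1 ≤ d) :
    (2:ℂ)^d + Vf d (j+d+1) d = 2 * Vf d (j+d) d + (if j < d then 1 else 2^(j-d)) := by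
  unfold Vf
  rw [if_neg (by omega), if_neg (by omega),
    show j+d+1-d = j+1 by omega, show j+d+1-(2*d+1) = j-d by omega,
    show j+d-d = j by omega, show j+d-(2*d+1) = j-d-1 by omega]
  have := corr_rel (j-d)
  by_cases h1 : j < d
  · rw [if_pos h1, show j - d = 0 by omega] at *
    rw [show (0:ℕ)-1 = 0 by omega] at this
    rw [pow_succ]
    linear_combination this
  · rw [if_neg h1, pow_succ]
    linear_combination this

lemma Wf_zero (d k : ℕ) (hk : k ≤ d) : Wf d k 0 = 2^k := by
  unfold Wf Vf
  rcases lt_or_eq_of_le hk with hk | rfl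
  · rw [if_pos (by omega)]
  · rw [if_neg (by omega), show 0+k-k = 0 by omega, show 0+k-(2*k+1) = 0 by omega]
    simp [corr]

lemma Wf_step (d k j : ℕ) (hd : 1 ≤ d) (hk : k ≤ d) (hj : j ≤ 2*d) :
    Wf d (k+1) j = Wf d k 0 + (if j < 2*d then Wf d k (j+1) else 2 * Wf d k (2*d)) := by
  rw [Wf_zero d k hk]
  unfold Wf
  by_cases h1 : j < 2*d
  · rw [if_pos h1, show j + (k+1) = (j+1)+k by omega, VA]
  · rw [if_neg h1, show j = 2*d by omega, show 2*d + (k+1) = 2*d+k+1 by omega, VA, VB d k hd]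

lemma Wf_row (d j : ℕ) (hd : 1 ≤ d) (hj : j ≤ 2*d) :
    Wf d (d+1) j = 2 * Wf d d j + (if j < d then 1 else 2^(j-d)) := by
  unfold Wf
  rw [show j + (d+1) = j+d+1 by omega, VA, show (j+d)+1 = j+d+1 by omega, Vrow d j hd]

lemma Wf_val (d n : ℕ) (hd : 1 ≤ d) : Wf d n (2*d) = 2^(n+d) + (n:ℂ) * 2^(n-1) := by
  unfold Wf Vf
  rw [if_neg (by omega), show 2*d+n-d = n+d by omega, show 2*d+n-(2*d+1) = n-1 by omega]
  match n with
  | 0 => simp [corr]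
  | 1 => simp [corr]; ring
  | (m+2) =>
    rw [corr, if_neg (by omega : ¬ (m+2-1 = 0)), show m+2-1 = m+1 by omega]
    push_cast
    rw [show m+2 = (m+1)+1 by omega, pow_succ]
    ring

lemma Wf_base (d j : ℕ) (hd : 1 ≤ d) (hj : j ≤ 2*d) :
    Wf d 0 j = if j < d then 1 else 2^(j-d) := by
  unfold Wf Vf
  rw [show j + 0 = j by omega]
  by_cases h : j < d
  · rw [if_pos h, if_pos h]; norm_num
  · rw [if_neg h, if_neg h, show j - (2*d+1) = 0 by omega]
    simp [corr]

/-! #### The matrix bridge -/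

lemma vecMul_Mmat (d : ℕ) (hd : 1 ≤ d) (w : Fin (2*d+1) → ℂ) (j : Fin (2*d+1)) :
    (Matrix.vecMul w (Mmat d)) j =
      w ⟨0, by omega⟩ +
        (if hj : (j:ℕ) < 2*d then w ⟨(j:ℕ)+1, by omega⟩ else 2 * w ⟨2*d, by omega⟩) := by
  rw [Matrix.vecMul, dotProduct]
  by_cases hj : (j:ℕ) < 2*d
  · rw [dif_pos hj]
    have key : ∀ i : Fin (2*d+1), w i * Mmat d i j =
        (if i = (⟨0, by omega⟩ : Fin (2*d+1)) then w i else 0)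
        + (if i = (⟨(j:ℕ)+1, by omega⟩ : Fin (2*d+1)) then w i else 0) := by
      intro i
      simp only [Mmat, Matrix.of_apply, Fin.ext_iff]
      split_ifs <;> simp_all <;> omega
    simp_rw [key, Finset.sum_add_distrib, Finset.sum_ite_eq', Finset.mem_univ, if_pos]
  · rw [dif_neg hj]
    have hj' : (j:ℕ) = 2*d := by omega
    have key : ∀ i : Fin (2*d+1), w i * Mmat d i j =
        (if i = (⟨0, by omega⟩ : Fin (2*d+1)) then w i else 0)
        + (if i = (⟨2*d, by omega⟩ : Fin (2*d+1)) then 2 * w i else 0) := by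
      intro i
      simp only [Mmat, Matrix.of_apply, Fin.ext_iff]
      split_ifs <;> simp_all <;> try omega
      · ring
    simp_rw [key, Finset.sum_add_distrib, Finset.sum_ite_eq', Finset.mem_univ, if_pos]

section MatrixSide
variable (d : ℕ) (hd : 1 ≤ d) (h : Fin (2 * d + 1) → ℂ)
  (hh : ∀ i : Fin (2 * d + 1), h i = if (i : ℕ) < d then 1 else 2 ^ ((i : ℕ) - d))

include hd hh

lemma hW : ∀ k, k ≤ d + 1 → Matrix.vecMul h ((Mmat d)^k) = fun j : Fin (2*d+1) => Wf d k (j:ℕ) := by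
  intro k
  induction k with
  | zero =>
    intro _
    funext j
    rw [pow_zero, Matrix.vecMul_one, hh j, Wf_base d j hd (by omega)]
  | succ k ih =>
    intro hk
    have ihk := ih (by omega)
    funext j
    rw [pow_succ, ← Matrix.vecMul_vecMul, ihk, vecMul_Mmat d hd _ j,
      Wf_step d k j hd (by omega) (by omega)]
    by_cases hj : (j:ℕ) < 2*d
    · rw [dif_pos hj, if_pos hj]
    · rw [dif_neg hj, if_neg hj]

lemma u_init : ∀ n, n ≤ d + 1 →
    dotProduct h (((Mmat d) ^ n).mulVec (eLast d)) = 2^(n+d) + (n:ℂ) * 2^(n-1) := by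
  intro n hn
  rw [Matrix.dotProduct_mulVec, hW d hd h hh n hn]
  unfold eLast
  rw [dotProduct_single, mul_one, Fin.val_last, Wf_val d n hd]

lemma u_rec : ∀ n, dotProduct h (((Mmat d) ^ (n+(d+1))).mulVec (eLast d)) =
    2 * dotProduct h (((Mmat d) ^ (n+d)).mulVec (eLast d))
    + dotProduct h (((Mmat d) ^ n).mulVec (eLast d)) := by
  intro n
  have hrow : Matrix.vecMul h ((Mmat d)^(d+1)) =
      (2 : ℂ) • Matrix.vecMul h ((Mmat d)^d) + h := by
    rw [hW d hd h hh (d+1) le_rfl, hW d hd h hh d (by omega)]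
    funext j
    simp only [Pi.add_apply, Pi.smul_apply, smul_eq_mul]
    rw [Wf_row d j hd (by omega), hh j]
  rw [show n+(d+1) = (d+1)+n by ring, pow_add, ← Matrix.mulVec_mulVec,
    Matrix.dotProduct_mulVec, hrow, add_dotProduct, smul_dotProduct,
    ← Matrix.dotProduct_mulVec, Matrix.mulVec_mulVec, ← pow_add,
    show d + n = n + d by ring]
  simp [smul_eq_mul]

end MatrixSide

/-! #### The polynomial side -/

noncomputable def qp (d : ℕ) : ℂ[X] := X^(d+1) - C 2 * X^d - C 1

lemma qp_eval (d : ℕ) (z : ℂ) : (qp d).eval z = z^(d+1) - 2*z^d - 1 := by simp [qp]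
lemma qp_natDegree (d : ℕ) : (qp d).natDegree = d + 1 := by unfold qp; compute_degree!
lemma qp_monic (d : ℕ) : (qp d).Monic := by unfold qp; monicity!
lemma qp_ne_zero (d : ℕ) : qp d ≠ 0 := (qp_monic d).ne_zero

lemma qp_deriv (d : ℕ) (hd : 1 ≤ d) (z : ℂ) :
    (derivative (qp d)).eval z = z^(d-1) * (((d:ℂ)+1) * z - 2*d) := by
  unfold qp
  simp only [derivative_sub, derivative_C_mul, derivative_X_pow, derivative_C, derivative_one,
    sub_zero, eval_sub, eval_mul, eval_natCast, eval_pow, eval_X, eval_C]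
  rw [show d+1-1 = d by omega]
  have e : z^d = z^(d-1)*z := by rw [← pow_succ, show d-1+1 = d by omega]
  rw [e]; push_cast; ring

lemma qp_separable (d : ℕ) (hd : 1 ≤ d) : (qp d).Separable := by
  rw [Polynomial.Separable,
    Polynomial.isCoprime_iff_aeval_ne_zero_of_isAlgClosed ℂ ℂ]
  intro a
  by_contra hcon
  push_neg at hcon
  obtain ⟨h1, h2⟩ := hcon
  rw [show (aeval a) (qp d) = (qp d).eval a from by simp only [coe_aeval_eq_eval]] at h1
  rw [show (aeval a) (derivative (qp d)) = (derivative (qp d)).eval a from by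
    simp only [coe_aeval_eq_eval]] at h2
  rw [qp_eval] at h1
  rw [qp_deriv d hd] at h2
  by_cases ha : a = 0
  · subst ha
    rw [zero_pow (by omega : d + 1 ≠ 0), zero_pow (by omega : d ≠ 0)] at h1
    norm_num at h1
  · have hfac : ((d:ℂ)+1) * a - 2*d = 0 := by
      rcases mul_eq_zero.mp h2 with h | h
      · exact absurd (pow_eq_zero_iff' .. |>.mp h |>.1) ha
      · exact h
    set x : ℝ := 2*d / (d+1) with hx
    have hd1 : ((d:ℂ)+1) ≠ 0 := Nat.cast_add_one_ne_zero d
    have haeq : a = (x:ℂ) := by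
      have hd1' : ((d:ℝ)+1) ≠ 0 := by positivity
      rw [hx]
      push_cast
      field_simp
      linear_combination hfac
    rw [haeq] at h1
    have h1' : ((x^(d+1) - 2*x^d - 1 : ℝ) : ℂ) = 0 := by push_cast; linear_combination h1
    rw [Complex.ofReal_eq_zero] at h1'
    have hx0 : 0 < x := by rw [hx]; positivity
    have hx2 : x < 2 := by
      rw [hx, div_lt_iff₀ (by positivity)]
      have h1d : (1:ℝ) ≤ (d:ℝ) := by exact_mod_cast hd
      linarith
    have hpow : 0 < x^d := pow_pos hx0 d
    have : x^(d+1) = x^d * x := by rw [pow_succ]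
    nlinarith [mul_pos hpow hx0]

lemma derivative_finset_prod (s : Finset ℂ) :
    derivative (∏ mu ∈ s, (X - C mu)) = ∑ i ∈ s, ∏ mu ∈ s.erase i, (X - C mu) := by
  classical
  induction s using Finset.induction_on with
  | empty => simp
  | @insert a s ha ih =>
    rw [Finset.prod_insert ha, derivative_mul, ih, Finset.sum_insert ha,
      Finset.erase_insert ha]
    have : ∀ i ∈ s, ∏ mu ∈ (insert a s).erase i, (X - C mu)
        = (X - C a) * ∏ mu ∈ s.erase i, (X - C mu) := by
      intro i hi
      rw [Finset.erase_insert_of_ne (by rintro rfl; exact ha hi),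
        Finset.prod_insert (by simp [Finset.mem_erase]; tauto)]
    rw [Finset.sum_congr rfl this, ← Finset.mul_sum]
    simp [mul_comm]

section PolySide
variable (d : ℕ) (hd : 1 ≤ d) (S : Finset ℂ)
  (hS : ∀ z : ℂ, z ∈ S ↔ z ^ (d + 1) - 2 * z ^ d - 1 = 0)

include hd hS

lemma S_val : S.val = (qp d).roots := by
  have hnodup : (qp d).roots.Nodup := nodup_roots (qp_separable d hd)
  have hfin : (qp d).roots.toFinset = S := by
    ext z
    rw [Multiset.mem_toFinset, mem_roots (qp_ne_zero d), IsRoot, qp_eval, hS]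
  calc S.val = ((qp d).roots.toFinset).val := by rw [hfin]
    _ = (qp d).roots.dedup := Multiset.toFinset_val _
    _ = (qp d).roots := Multiset.dedup_eq_self.mpr hnodup

lemma S_card : S.card = d + 1 := by
  have h1 : Multiset.card (qp d).roots = (qp d).natDegree :=
    splits_iff_card_roots.mp (IsAlgClosed.splits _)
  rw [Finset.card_def, S_val d hd S hS, h1, qp_natDegree]

lemma S_prod : ∏ lam ∈ S, (X - C lam) = qp d := by
  rw [Finset.prod_eq_multiset_prod, S_val d hd S hS]
  exact prod_multiset_X_sub_C_of_monic_of_roots_card_eq (qp_monic d)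
    (by rw [splits_iff_card_roots.mp (IsAlgClosed.splits _)])

lemma D_eq : ∀ lam ∈ S, ∏ mu ∈ S.erase lam, (lam - mu)
    = lam^(d-1) * (((d:ℂ)+1) * lam - 2*d) := by
  intro lam hlam
  rw [← qp_deriv d hd lam, ← S_prod d hd S hS, derivative_finset_prod, eval_finset_sum]
  rw [Finset.sum_eq_single_of_mem lam hlam]
  · rw [eval_prod]
    exact Finset.prod_congr rfl (by intro x hx; simp)
  · intro i hi hne
    rw [eval_prod]
    apply Finset.prod_eq_zero (Finset.mem_erase.mpr ⟨hne.symm, hlam⟩)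
    simp

lemma sum_coeff (g : ℂ[X]) (hg : g.degree < (d+1 : ℕ)) :
    ∑ lam ∈ S, g.eval lam / (∏ mu ∈ S.erase lam, (lam - mu)) = g.coeff d := by
  classical
  have hinj : Set.InjOn id (S : Set ℂ) := Function.injective_id.injOn
  have hcard := S_card d hd S hS
  have hg' : g.degree < S.card := by rw [hcard]; exact_mod_cast hg
  have hinterp := Lagrange.eq_interpolate (v := id) hinj hg'
  have : g.coeff d = (Lagrange.interpolate S id fun i => g.eval (id i)).coeff d := by
    rw [← hinterp]
  rw [this, Lagrange.interpolate_apply, finset_sum_coeff]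
  apply Finset.sum_congr rfl
  intro lam hlam
  rw [coeff_C_mul]
  have hbasis : (Lagrange.basis S id lam) =
      C ((∏ mu ∈ S.erase lam, (lam - mu))⁻¹) * ∏ mu ∈ S.erase lam, (X - C mu) := by
    rw [Lagrange.basis]
    unfold Lagrange.basisDivisor
    rw [Finset.prod_mul_distrib, ← Finset.prod_inv_distrib, ← map_prod]
    rfl
  have hmon : (∏ mu ∈ S.erase lam, (X - C mu)).Monic :=
    monic_prod_of_monic _ _ (fun mu _ => monic_X_sub_C mu)
  have hdeg : (∏ mu ∈ S.erase lam, (X - C mu)).natDegree = d := by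
    rw [natDegree_prod_of_monic _ _ (fun mu _ => monic_X_sub_C mu)]
    simp only [natDegree_X_sub_C, Finset.sum_const, smul_eq_mul, mul_one]
    rw [Finset.card_erase_of_mem hlam, hcard]; omega
  have hco : (∏ mu ∈ S.erase lam, (X - C mu)).coeff d = 1 := by
    rw [← hdeg]; exact hmon.coeff_natDegree
  rw [hbasis, coeff_C_mul, hco, mul_one, div_eq_mul_inv, id]

end PolySide

noncomputable def Tsum (S : Finset ℂ) (j : ℕ) : ℂ :=
  ∑ lam ∈ S, lam^j / (∏ mu ∈ S.erase lam, (lam - mu))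

section TSide
variable (d : ℕ) (hd : 1 ≤ d) (S : Finset ℂ)
  (hS : ∀ z : ℂ, z ∈ S ↔ z ^ (d + 1) - 2 * z ^ d - 1 = 0)

include hd hS

lemma root_facts : ∀ lam ∈ S, lam^(d+1) = 2*lam^d + 1 ∧ lam ≠ 0 ∧
    (∏ mu ∈ S.erase lam, (lam - mu)) ≠ 0 ∧ ((d:ℂ)+1) * lam - 2*d ≠ 0 := by
  intro lam hlam
  have hroot : lam^(d+1) = 2*lam^d + 1 := by
    have := (hS lam).mp hlam
    linear_combination this
  have hlam0 : lam ≠ 0 := by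
    rintro rfl
    rw [zero_pow (by omega : d ≠ 0), zero_pow (by omega : d+1 ≠ 0)] at hroot
    norm_num at hroot
  have hDne : (∏ mu ∈ S.erase lam, (lam - mu)) ≠ 0 := by
    rw [Finset.prod_ne_zero_iff]
    intro mu hmu
    have := (Finset.mem_erase.mp hmu).1
    exact sub_ne_zero_of_ne (Ne.symm this)
  have hBne : ((d:ℂ)+1) * lam - 2*d ≠ 0 := by
    rw [D_eq d hd S hS lam hlam] at hDne
    exact right_ne_zero_of_mul hDne
  exact ⟨hroot, hlam0, hDne, hBne⟩

lemma T_low (j : ℕ) (hj : j < d) : Tsum S j = 0 := by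
  unfold Tsum
  have := sum_coeff d hd S hS (X^j)
    (by rw [degree_X_pow]; exact_mod_cast (show j < d+1 by omega))
  simp only [eval_pow, eval_X] at this
  rw [this, coeff_X_pow, if_neg (by omega)]

lemma T_d : Tsum S d = 1 := by
  unfold Tsum
  have := sum_coeff d hd S hS (X^d)
    (by rw [degree_X_pow]; exact_mod_cast (show d < d+1 by omega))
  simp only [eval_pow, eval_X] at this
  rw [this, coeff_X_pow, if_pos rfl]

lemma T_rec (j : ℕ) : Tsum S (j+(d+1)) = 2 * Tsum S (j+d) + Tsum S j := by
  unfold Tsum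
  rw [Finset.mul_sum, ← Finset.sum_add_distrib]
  apply Finset.sum_congr rfl
  intro lam hlam
  obtain ⟨hroot, -, -, -⟩ := root_facts d hd S hS lam hlam
  rw [pow_add lam j (d+1), pow_add lam j d, hroot]
  ring

lemma T_mid : ∀ m, m ≤ d → Tsum S (d+m) = 2^m := by
  intro m
  induction m with
  | zero => intro _; simpa using T_d d hd S hS
  | succ m ih =>
    intro hm
    rw [show d+(m+1) = m+(d+1) by omega, T_rec d hd S hS, show m+d = d+m by omega,
      ih (by omega), T_low d hd S hS m (by omega), pow_succ]
    ring

lemma T_high : ∀ n, n ≤ d → Tsum S (2*d+n) = 2^(n+d) + (n:ℂ) * 2^(n-1) := by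
  intro n
  induction n with
  | zero =>
    intro _
    rw [show 2*d+0 = d+d by omega, T_mid d hd S hS d le_rfl]
    norm_num
  | succ n ih =>
    intro hn
    rw [show 2*d+(n+1) = (d+n)+(d+1) by omega, T_rec d hd S hS, show d+n+d = 2*d+n by omega,
      ih (by omega), T_mid d hd S hS n (by omega)]
    match n with
    | 0 =>
      norm_num
      rw [add_comm 1 d, pow_succ]
      ring
    | (m+1) =>
      rw [show m+1-1 = m by omega, show m+1+1-1 = m+1 by omega]
      push_cast
      rw [show m+1+1+d = m+d+1+1 by omega, show m+1+d = m+d+1 by omega]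
      simp only [pow_succ]
      ring

lemma R_bridge (n : ℕ) :
    ∑ lam ∈ S, lam ^ (d + 1) / (((d : ℂ) + 1) * lam - 2 * d) * lam ^ n = Tsum S (2*d+n) := by
  unfold Tsum
  apply Finset.sum_congr rfl
  intro lam hlam
  obtain ⟨-, hlam0, hDne, hBne⟩ := root_facts d hd S hS lam hlam
  rw [D_eq d hd S hS lam hlam]
  rw [show 2*d+n = (d-1)+(d+1)+n by omega, pow_add, pow_add]
  have hpne : lam^(d-1) ≠ 0 := pow_ne_zero _ hlam0
  field_simp
  ring

end TSide

theorem stmt_16 (d : ℕ) (hd : 1 ≤ d)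
    (h : Fin (2 * d + 1) → ℂ)
    (hh : ∀ i : Fin (2 * d + 1),
      h i = if (i : ℕ) < d then 1 else 2 ^ ((i : ℕ) - d))
    (S : Finset ℂ)
    (hS : ∀ z : ℂ, z ∈ S ↔ z ^ (d + 1) - 2 * z ^ d - 1 = 0) :
    ∀ n : ℕ,
      dotProduct h (((Mmat d) ^ n).mulVec (eLast d)) =
        ∑ lam ∈ S, lam ^ (d + 1) / (((d : ℂ) + 1) * lam - 2 * d) * lam ^ n := by
  have key : ∀ n : ℕ,
      dotProduct h (((Mmat d) ^ n).mulVec (eLast d)) = Tsum S (2*d+n) := by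
    intro n
    induction n using Nat.strong_induction_on with
    | _ n ih =>
      by_cases hn : n ≤ d
      · rw [u_init d hd h hh n (by omega), T_high d hd S hS n hn]
      · have hm : n = (n-(d+1)) + (d+1) := by omega
        rw [hm, u_rec d hd h hh (n-(d+1)),
          ih ((n-(d+1))+d) (by omega), ih (n-(d+1)) (by omega),
          show 2*d+((n-(d+1))+(d+1)) = (2*d+(n-(d+1)))+(d+1) by omega,
          T_rec d hd S hS (2*d+(n-(d+1))),
          show (2*d+(n-(d+1)))+d = 2*d+((n-(d+1))+d) by omega]
  intro n
  rw [key n, ← R_bridge d hd S hS n]
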